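/- Every relatively complemented lattice is congruence splitting. -/

import Mathlib

/-- A lattice congruence on `L`: an equivalence relation compatible with `⊔` and `⊓`. -/
structure LatticeCong (L : Type*) [Lattice L] where
  r : L → L → Prop
  refl : ∀ x, r x x
  symm : ∀ {x y}, r x y → r y x
  trans : ∀ {x y z}, r x y → r y z → r x z
  sup : ∀ {a b c d}, r a b → r c d → r (a ⊔ c) (b ⊔ d)
  inf : ∀ {a b c d}, r a b → r c d → r (a ⊓ c) (b ⊓ d)

namespace LatticeCong
variable {L : Type*} [Lattice L]

instance : PartialOrder (LatticeCong L) where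
  le θ φ := ∀ x y, θ.r x y → φ.r x y
  le_refl θ := fun _ _ h => h
  le_trans θ φ ψ h1 h2 := fun x y h => h2 x y (h1 x y h)
  le_antisymm θ φ h1 h2 := by
    cases θ; cases φ
    simp only [LatticeCong.mk.injEq]
    funext x y
    exact propext ⟨h1 x y, h2 x y⟩

instance : InfSet (LatticeCong L) where
  sInf S :=
  { r := fun x y => ∀ θ ∈ S, θ.r x y
    refl := fun x θ _ => θ.refl x
    symm := fun h θ hθ => θ.symm (h θ hθ)
    trans := fun h1 h2 θ hθ => θ.trans (h1 θ hθ) (h2 θ hθ)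
    sup := fun h1 h2 θ hθ => θ.sup (h1 θ hθ) (h2 θ hθ)
    inf := fun h1 h2 θ hθ => θ.inf (h1 θ hθ) (h2 θ hθ) }

instance : CompleteLattice (LatticeCong L) :=
  completeLatticeOfInf _ (fun _ =>
    ⟨fun θ hθ _ _ h => h θ hθ, fun _ hφ _ _ h θ hθ => hφ hθ _ _ h⟩)

end LatticeCong

/-- `theta a b` is the principal congruence generated by the pair `(a, b)`. -/
def theta {L : Type*} [Lattice L] (a b : L) : LatticeCong L :=
  sInf {θ : LatticeCong L | θ.r a b}

/-- `thetaPlus a b = Θ⁺(a,b) = Θ(a ⊓ b, a)`, the least congruence collapsing `a` below `b`. -/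
def thetaPlus {L : Type*} [Lattice L] (a b : L) : LatticeCong L :=
  theta (a ⊓ b) a

/-- Every relatively complemented lattice is congruence splitting. -/
theorem relativelyComplemented_congruenceSplitting {L : Type*} [Lattice L]
    (hrel : ∀ a x b : L, a ≤ x → x ≤ b → ∃ y : L, x ⊓ y = a ∧ x ⊔ y = b) :
    ∀ a b : L, a ≤ b → ∀ α₀ α₁ : LatticeCong L, theta a b = α₀ ⊔ α₁ →
      ∃ x₀ ∈ Set.Icc a b, ∃ x₁ ∈ Set.Icc a b,
        x₀ ⊔ x₁ = b ∧ theta a x₀ ≤ α₀ ∧ theta a x₁ ≤ α₁ := by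
  intro a b hab α₀ α₁ hθ
  classical
  have hab' : (α₀ ⊔ α₁).r a b := by
    have h : (theta a b).r a b := fun θ hθ' => hθ'
    rwa [hθ] at h
  set t : L → L → Prop := fun x y => α₀.r x y ∨ α₁.r x y with ht
  have tstep_sup : ∀ {x y : L} (c : L), t x y → t (x ⊔ c) (y ⊔ c) := by
    intro x y c h
    exact h.imp (fun h => α₀.sup h (α₀.refl c)) (fun h => α₁.sup h (α₁.refl c))
  have tstep_inf : ∀ {x y : L} (c : L), t x y → t (x ⊓ c) (y ⊓ c) := by
    intro x y c h
    exact h.imp (fun h => α₀.inf h (α₀.refl c)) (fun h => α₁.inf h (α₁.refl c))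
  have mono_sup : ∀ {x y : L} (c : L), Relation.ReflTransGen t x y →
      Relation.ReflTransGen t (x ⊔ c) (y ⊔ c) := by
    intro x y c h
    induction h with
    | refl => exact Relation.ReflTransGen.refl
    | tail _ hstep ih => exact ih.tail (tstep_sup c hstep)
  have mono_inf : ∀ {x y : L} (c : L), Relation.ReflTransGen t x y →
      Relation.ReflTransGen t (x ⊓ c) (y ⊓ c) := by
    intro x y c h
    induction h with
    | refl => exact Relation.ReflTransGen.refl
    | tail _ hstep ih => exact ih.tail (tstep_inf c hstep)
  have hchain : Relation.ReflTransGen t a b := by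
    let β : LatticeCong L :=
      { r := Relation.ReflTransGen t
        refl := fun x => Relation.ReflTransGen.refl
        symm := by
          intro x y h
          induction h with
          | refl => exact Relation.ReflTransGen.refl
          | tail _ hstep ih =>
            exact Relation.ReflTransGen.head (hstep.imp α₀.symm α₁.symm) ih
        trans := fun h1 h2 => h1.trans h2
        sup := by
          intro p q c d h1 h2
          have ha : Relation.ReflTransGen t (p ⊔ c) (q ⊔ c) := mono_sup c h1
          have hb : Relation.ReflTransGen t (c ⊔ q) (d ⊔ q) := mono_sup q h2
          rw [sup_comm c q, sup_comm d q] at hb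
          exact ha.trans hb
        inf := by
          intro p q c d h1 h2
          have ha : Relation.ReflTransGen t (p ⊓ c) (q ⊓ c) := mono_inf c h1
          have hb : Relation.ReflTransGen t (c ⊓ q) (d ⊓ q) := mono_inf q h2
          rw [inf_comm c q, inf_comm d q] at hb
          exact ha.trans hb }
    have h0 : α₀ ≤ β := fun x y h => Relation.ReflTransGen.single (Or.inl h)
    have h1 : α₁ ≤ β := fun x y h => Relation.ReflTransGen.single (Or.inr h)
    exact sup_le h0 h1 a b hab'
  -- project the chain into the interval [a, b]
  set t' : L → L → Prop := fun x y => t x y ∧ (a ≤ x ∧ x ≤ b) ∧ (a ≤ y ∧ y ≤ b) with ht'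
  have hchain' : Relation.ReflTransGen t' a b := by
    have hmem : ∀ z : L, a ≤ (z ⊔ a) ⊓ b ∧ (z ⊔ a) ⊓ b ≤ b := fun z =>
      ⟨le_inf le_sup_right hab, inf_le_right⟩
    have hlift : ∀ x y : L, t x y →
        t' ((x ⊔ a) ⊓ b) ((y ⊔ a) ⊓ b) := by
      intro x y h
      exact ⟨tstep_inf b (tstep_sup a h), hmem x, hmem y⟩
    have h := hchain.lift (p := t') (fun z => (z ⊔ a) ⊓ b) (fun {x y} h => hlift x y h)
    have ha : (a ⊔ a) ⊓ b = a := by rw [sup_idem, inf_eq_left]; exact hab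
    have hb : (b ⊔ a) ⊓ b = b := by rw [sup_eq_left.mpr hab, inf_idem]
    simpa only [Function.onFun, ha, hb] using h
  have key : ∀ c : L, Relation.ReflTransGen t' a c →
      ∃ x₀ x₁ : L, (a ≤ x₀ ∧ x₀ ≤ b) ∧ (a ≤ x₁ ∧ x₁ ≤ b) ∧
        α₀.r a x₀ ∧ α₁.r a x₁ ∧ c ≤ x₀ ⊔ x₁ := by
    intro c h
    induction h with
    | refl =>
      exact ⟨a, a, ⟨le_refl a, hab⟩, ⟨le_refl a, hab⟩, α₀.refl a, α₁.refl a, le_sup_left⟩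
    | @tail c d _ hstep ih =>
      obtain ⟨x₀, x₁, ⟨hax0, hx0b⟩, ⟨hax1, hx1b⟩, hr0, hr1, hcle⟩ := ih
      obtain ⟨hstep', ⟨hac, hcb⟩, ⟨had, hdb⟩⟩ := hstep
      have hau : a ≤ x₀ ⊔ x₁ := hax0.trans le_sup_left
      have hub : x₀ ⊔ x₁ ≤ b := sup_le hx0b hx1b
      obtain ⟨y, hy1, hy2⟩ := hrel a (x₀ ⊔ x₁) ((x₀ ⊔ x₁) ⊔ d) hau le_sup_left
      have hyud : y ≤ (x₀ ⊔ x₁) ⊔ d := hy2 ▸ le_sup_right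
      have hyb : y ≤ b := hyud.trans (sup_le hub hdb)
      have hay : a ≤ y := hy1.symm.le.trans inf_le_right
      have hy_rel : ∀ α : LatticeCong L, α.r c d → α.r a y := by
        intro α h
        have h1 : α.r (x₀ ⊔ x₁) ((x₀ ⊔ x₁) ⊔ d) := by
          have h2 := α.sup (α.refl (x₀ ⊔ x₁)) h
          rwa [sup_eq_left.mpr hcle] at h2
        have h3 := α.inf (α.symm h1) (α.refl y)
        rw [inf_eq_right.mpr hyud, hy1] at h3
        exact α.symm h3
      have hdle : d ≤ (x₀ ⊔ x₁) ⊔ y := by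
        rw [hy2]; exact le_sup_right
      rcases hstep' with h | h
      · refine ⟨x₀ ⊔ y, x₁, ⟨hax0.trans le_sup_left, sup_le hx0b hyb⟩, ⟨hax1, hx1b⟩, ?_, hr1, ?_⟩
        · have := α₀.sup hr0 (hy_rel α₀ h)
          rwa [sup_idem] at this
        · rw [sup_right_comm]; exact hdle
      · refine ⟨x₀, x₁ ⊔ y, ⟨hax0, hx0b⟩, ⟨hax1.trans le_sup_left, sup_le hx1b hyb⟩, hr0, ?_, ?_⟩
        · have := α₁.sup hr1 (hy_rel α₁ h)
          rwa [sup_idem] at this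
        · rw [← sup_assoc]; exact hdle
  obtain ⟨x₀, x₁, ⟨hax0, hx0b⟩, ⟨hax1, hx1b⟩, hr0, hr1, hble⟩ := key b hchain'
  refine ⟨x₀, ⟨hax0, hx0b⟩, x₁, ⟨hax1, hx1b⟩, le_antisymm (sup_le hx0b hx1b) hble, ?_, ?_⟩
  · exact sInf_le (show α₀ ∈ {θ : LatticeCong L | θ.r a x₀} from hr0)
  · exact sInf_le (show α₁ ∈ {θ : LatticeCong L | θ.r a x₁} from hr1)
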